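/- If τ_N ∈ [0.5, τ*] is a Nash equilibrium threshold, then every τ ∈ [τ_N, τ*] is also a Nash equilibrium threshold; hence the set of Nash thresholds is an interval [τ_N, τ*]. -/

import Mathlib

open MeasureTheory

/-- If `τ_N ∈ [0.5, τ*]` is a Nash equilibrium threshold, then every
`τ ∈ [τ_N, τ*]` is also a Nash equilibrium threshold (so the Nash thresholds
form the interval `[τ_N, τ*]`). -/
theorem stmt_14 {Ω : Type*} [MeasurableSpace Ω] (P : Measure Ω)
    [IsProbabilityMeasure P]
    (L : Ω → ℝ) (Yv : Ω → Bool) (hLmeas : Measurable L)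
    (hrange : ∀ ω, L ω ∈ Set.Icc (0:ℝ) 1)
    (hsupp : ∀ a b : ℝ, a < b → (Set.Ioo a b ∩ Set.Icc (0:ℝ) 1).Nonempty →
      0 < P (L ⁻¹' Set.Ioo a b))
    (cL : ℝ → ℝ → ℝ) (hcont : Continuous fun p : ℝ × ℝ => cL p.1 p.2)
    (hnn : ∀ l t : ℝ, 0 ≤ cL l t)
    (hanti : ∀ t : ℝ, Antitone fun l => cL l t)
    (hmono : ∀ l : ℝ, Monotone fun t => cL l t)
    (hzero : ∀ l t : ℝ, t ≤ l → cL l t = 0)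
    (hcond : ∀ S : Set ℝ, MeasurableSet S →
      (P ({ω | Yv ω = true} ∩ L ⁻¹' S)).toReal = ∫ ω in L ⁻¹' S, L ω ∂P)
    (τstar : ℝ) (hstar : IsGreatest {t : ℝ | t ≤ 1 ∧ cL (1/2) t ≤ 1} τstar)
    (τN : ℝ) (hτN : 1/2 ≤ τN) (hτNstar : τN ≤ τstar)
    (hNash1 : ∀ l ∈ Set.Icc (0:ℝ) 1, τN < l → 1/2 ≤ l)
    (hNash2 : ∀ l ∈ Set.Icc (0:ℝ) 1, l < τN → 1 < cL l τN → l < 1/2)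
    (hNash3 : (1/2) * (P {ω | cL (L ω) τN ≤ 1 ∧ L ω ≤ τN}).toReal ≤
      (P ({ω | Yv ω = true} ∩ {ω | cL (L ω) τN ≤ 1 ∧ L ω ≤ τN})).toReal)
    (τ : ℝ) (hτl : τN ≤ τ) (hτu : τ ≤ τstar) :
    (∀ l ∈ Set.Icc (0:ℝ) 1, τ < l → 1/2 ≤ l) ∧
    (∀ l ∈ Set.Icc (0:ℝ) 1, l < τ → 1 < cL l τ → l < 1/2) ∧
    (1/2) * (P {ω | cL (L ω) τ ≤ 1 ∧ L ω ≤ τ}).toReal ≤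
      (P ({ω | Yv ω = true} ∩ {ω | cL (L ω) τ ≤ 1 ∧ L ω ≤ τ})).toReal := by

  -- basic facts
  have hhalf_star : cL (1/2) τstar ≤ 1 := hstar.1.2
  have hhalf_τ : cL (1/2) τ ≤ 1 := le_trans (hmono (1/2) hτu) hhalf_star
  have hhalf_τN : cL (1/2) τN ≤ 1 := le_trans (hmono (1/2) hτNstar) hhalf_star
  refine ⟨?_, ?_, ?_⟩
  · intro l _ hlt; linarith
  · intro l _ hlτ hc
    by_contra h
    push_neg at h
    have : cL l τ ≤ cL (1/2) τ := hanti τ h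
    linarith
  · -- main part
    set Sτ : Set ℝ := {l | cL l τ ≤ 1 ∧ l ≤ τ} with hSτ
    set SN : Set ℝ := {l | cL l τN ≤ 1 ∧ l ≤ τN} with hSN
    have hcLτ : Measurable fun l => cL l τ :=
      (hcont.comp (continuous_id.prodMk continuous_const)).measurable
    have hcLτN : Measurable fun l => cL l τN :=
      (hcont.comp (continuous_id.prodMk continuous_const)).measurable
    have hSτm : MeasurableSet Sτ :=
      (measurableSet_le hcLτ measurable_const).inter
        (measurableSet_le measurable_id measurable_const)
    have hSNm : MeasurableSet SN :=
      (measurableSet_le hcLτN measurable_const).inter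
        (measurableSet_le measurable_id measurable_const)
    have hAτ : {ω | cL (L ω) τ ≤ 1 ∧ L ω ≤ τ} = L ⁻¹' Sτ := rfl
    have hAN : {ω | cL (L ω) τN ≤ 1 ∧ L ω ≤ τN} = L ⁻¹' SN := rfl
    have hAτm : MeasurableSet (L ⁻¹' Sτ) := hLmeas hSτm
    have hANm : MeasurableSet (L ⁻¹' SN) := hLmeas hSNm
    rw [hAτ, hcond Sτ hSτm]
    rw [hAN, hcond SN hSNm] at hNash3
    -- integrability
    have hLint : Integrable L P := by
      refine Integrable.mono' (integrable_const 1) hLmeas.aestronglyMeasurable ?_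
      filter_upwards with ω
      rw [Real.norm_eq_abs, abs_le]
      exact ⟨by linarith [(hrange ω).1], (hrange ω).2⟩
    have hgint : Integrable (fun ω => L ω - 1/2) P := hLint.sub (integrable_const _)
    -- rewrite both sides using g = L - 1/2
    have key : ∀ A : Set Ω, MeasurableSet A →
        (∫ ω in A, L ω ∂P) - (1/2) * (P A).toReal = ∫ ω in A, (L ω - 1/2) ∂P := by
      intro A hA
      rw [integral_sub (hLint.integrableOn) (integrableOn_const (measure_ne_top P A))]
      rw [setIntegral_const]
      ring_nf
      simp [smul_eq_mul]
      rfl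
    have hτgoal : (0:ℝ) ≤ ∫ ω in L ⁻¹' Sτ, (L ω - 1/2) ∂P := by
      have hN0 : (0:ℝ) ≤ ∫ ω in L ⁻¹' SN, (L ω - 1/2) ∂P := by
        rw [← key _ hANm]; linarith
      have hmono2 : ∫ ω in L ⁻¹' SN, (L ω - 1/2) ∂P ≤ ∫ ω in L ⁻¹' Sτ, (L ω - 1/2) ∂P := by
        rw [← integral_indicator hANm, ← integral_indicator hAτm]
        refine integral_mono (hgint.indicator hANm) (hgint.indicator hAτm) ?_
        intro ω
        by_cases hN : ω ∈ L ⁻¹' SN <;> by_cases hτ' : ω ∈ L ⁻¹' Sτ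
        · rw [Set.indicator_of_mem hN, Set.indicator_of_mem hτ']
        · -- in SN, not in Sτ : g ω ≤ 0
          rw [Set.indicator_of_mem hN, Set.indicator_of_notMem hτ']
          obtain ⟨h1, h2⟩ := hN
          have h3 : L ω ≤ τ := le_trans h2 hτl
          have h4 : 1 < cL (L ω) τ := by
            by_contra hc; push_neg at hc; exact hτ' ⟨hc, h3⟩
          have h5 : L ω < 1/2 := by
            by_contra hc; push_neg at hc
            have : cL (L ω) τ ≤ cL (1/2) τ := hanti τ hc
            linarith
          linarith
        · -- in Sτ, not in SN : 0 ≤ g ω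
          rw [Set.indicator_of_notMem hN, Set.indicator_of_mem hτ']
          obtain ⟨h1, h2⟩ := hτ'
          have h3 : cL (L ω) τN ≤ 1 := le_trans (hmono (L ω) hτl) h1
          have h4 : τN < L ω := by
            by_contra hc; push_neg at hc; exact hN ⟨h3, hc⟩
          linarith
        · rw [Set.indicator_of_notMem hN, Set.indicator_of_notMem hτ']
      linarith
    have := key _ hAτm
    linarith
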